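/- Left multiplication by s is injective on images of words in the algebra H: for any two words Y, Z over Ψ, if the images of s·Y and s·Z in H are equal, then the images of Y and Z in H are equal. -/

import Mathlib

noncomputable section

/-- Direction of the head movement of the Turing machine. -/
inductive Dir
  | L
  | R
deriving DecidableEq

/-- The instruction table of Minsky's universal Turing machine: for a state `i` and a color `j`,
`instr i j` is `some (d, q, p)` where `d` is the direction of the head movement, `q` the new
state and `p` the new color of the current cell; it is `none` exactly for the STOP pair
`(4, 3)`. -/
def instr : Fin 7 → Fin 4 → Option (Dir × Fin 7 × Fin 4) := fun i j =>
  match i.val, j.val with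
  | 0, 0 => some (Dir.L, 4, 1)
  | 0, 1 => some (Dir.L, 1, 3)
  | 0, 2 => some (Dir.R, 0, 0)
  | 0, 3 => some (Dir.R, 0, 1)
  | 1, 0 => some (Dir.L, 1, 2)
  | 1, 1 => some (Dir.L, 1, 3)
  | 1, 2 => some (Dir.R, 0, 0)
  | 1, 3 => some (Dir.L, 1, 3)
  | 2, 0 => some (Dir.R, 2, 2)
  | 2, 1 => some (Dir.R, 2, 1)
  | 2, 2 => some (Dir.R, 2, 0)
  | 2, 3 => some (Dir.L, 4, 1)
  | 3, 0 => some (Dir.R, 3, 2)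
  | 3, 1 => some (Dir.R, 3, 1)
  | 3, 2 => some (Dir.R, 3, 0)
  | 3, 3 => some (Dir.L, 4, 0)
  | 4, 0 => some (Dir.L, 5, 2)
  | 4, 1 => some (Dir.L, 4, 1)
  | 4, 2 => some (Dir.L, 4, 0)
  | 4, 3 => none
  | 5, 0 => some (Dir.L, 5, 2)
  | 5, 1 => some (Dir.L, 5, 1)
  | 5, 2 => some (Dir.L, 6, 2)
  | 5, 3 => some (Dir.R, 2, 1)
  | 6, 0 => some (Dir.R, 0, 3)
  | 6, 1 => some (Dir.R, 6, 3)
  | 6, 2 => some (Dir.R, 6, 2)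
  | 6, 3 => some (Dir.R, 3, 1)
  | _, _ => none

/-- The alphabet `Ψ = {t, s, a_0, …, a_3, Q_0, …, Q_6, P_0, …, P_3, L, R}`. -/
inductive Psi
  | t
  | s
  | a (k : Fin 4)
  | Q (i : Fin 7)
  | P (j : Fin 4)
  | L
  | R
deriving DecidableEq, Fintype

/-- The image in the free algebra of a word over the alphabet `Ψ`. -/
def wrd (K : Type*) [Field K] (l : List Psi) : FreeAlgebra K Psi :=
  (l.map (FreeAlgebra.ι K)).prod

open Psi in
/-- The defining relations of the algebra `H`. -/
inductive HRel (K : Type*) [Field K] : FreeAlgebra K Psi → FreeAlgebra K Psi → Prop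
  | rel1 (k : Fin 4) :
      HRel K (wrd K [t, L, a k]) (wrd K [L, t, a k])
  | rel2 (k l : Fin 4) :
      HRel K (wrd K [t, a k, a l]) (wrd K [a k, t, a l])
  | rel9 :
      HRel K (wrd K [s, R]) (wrd K [R, s])
  | rel8 (k : Fin 4) :
      HRel K (wrd K [s, a k]) (wrd K [a k, s])
  | rel3 (i : Fin 7) (j : Fin 4) (q : Fin 7) (p : Fin 4) (k : Fin 4)
      (h : instr i j = some (Dir.L, q, p)) :
      HRel K (wrd K [t, a k, Q i, P j]) (wrd K [Q q, P k, a p, s])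
  | rel5 (i : Fin 7) (j : Fin 4) (q : Fin 7) (p : Fin 4)
      (h : instr i j = some (Dir.L, q, p)) :
      HRel K (wrd K [t, L, Q i, P j]) (wrd K [L, Q q, P 0, a p, s])
  | rel4 (i : Fin 7) (j : Fin 4) (q : Fin 7) (p : Fin 4) (l k : Fin 4)
      (h : instr i j = some (Dir.R, q, p)) :
      HRel K (wrd K [t, a l, Q i, P j, a k]) (wrd K [a l, a p, Q q, P k, s])
  | rel4b (i : Fin 7) (j : Fin 4) (q : Fin 7) (p : Fin 4) (k : Fin 4)
      (h : instr i j = some (Dir.R, q, p)) :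
      HRel K (wrd K [t, L, Q i, P j, a k]) (wrd K [L, a p, Q q, P k, s])
  | rel6 (i : Fin 7) (j : Fin 4) (q : Fin 7) (p : Fin 4) (l : Fin 4)
      (h : instr i j = some (Dir.R, q, p)) :
      HRel K (wrd K [t, a l, Q i, P j, R]) (wrd K [a l, a p, Q q, P 0, R, s])
  | rel6b (i : Fin 7) (j : Fin 4) (q : Fin 7) (p : Fin 4)
      (h : instr i j = some (Dir.R, q, p)) :
      HRel K (wrd K [t, L, Q i, P j, R]) (wrd K [L, a p, Q q, P 0, R, s])
  | rel7 :
      HRel K (wrd K [Q 4, P 3]) 0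

/-- The algebra `H`: the quotient of the free associative unital `K`-algebra on `Ψ` by the
two-sided ideal generated by the defining relations. -/
abbrev AlgH (K : Type*) [Field K] := RingQuot (HRel K)

/-- The image in `H` of a word over the alphabet `Ψ`. -/
def mkw (K : Type*) [Field K] (l : List Psi) : AlgH K :=
  RingQuot.mkAlgHom K (HRel K) (wrd K l)

/-- The image of the letter `t` in `H`. -/
def tEl (K : Type*) [Field K] : AlgH K := mkw K [Psi.t]

/-- The image of the letter `s` in `H`. -/
def sEl (K : Type*) [Field K] : AlgH K := mkw K [Psi.s]

/-! ### Auxiliary machinery -/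

namespace SInj

variable (K : Type*) [Field K]

theorem wrd_cons (c : Psi) (l : List Psi) :
    wrd K (c :: l) = FreeAlgebra.ι K c * wrd K l := by
  simp [wrd]

/-- delete the first `s` if only `a`'s and `R`'s precede it; otherwise `0`. -/
def sig0 : List Psi → FreeAlgebra K Psi
  | [] => 0
  | Psi.s :: w => wrd K w
  | Psi.a k :: w => FreeAlgebra.ι K (Psi.a k) * sig0 w
  | Psi.R :: w => FreeAlgebra.ι K Psi.R * sig0 w
  | _ :: _ => 0

theorem basis_eq (l : List Psi) :
    (FreeAlgebra.basisFreeMonoid K Psi) (FreeMonoid.ofList l) = wrd K l := by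
  rw [FreeAlgebra.basisFreeMonoid, Module.Basis.map_apply]
  have h1 : (Finsupp.basisSingleOne (ι := FreeMonoid Psi) (R := K)) (FreeMonoid.ofList l)
      = Finsupp.single (FreeMonoid.ofList l) 1 := by
    rw [Finsupp.coe_basisSingleOne]
  rw [h1]
  show (FreeAlgebra.equivMonoidAlgebraFreeMonoid (R := K) (X := Psi)).symm
      ((MonoidAlgebra.coeffLinearEquiv K).symm (Finsupp.single (FreeMonoid.ofList l) (1 : K))) = wrd K l
  rw [FreeAlgebra.equivMonoidAlgebraFreeMonoid, AlgEquiv.ofAlgHom_symm_apply]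
  have : ((MonoidAlgebra.coeffLinearEquiv K).symm (Finsupp.single (FreeMonoid.ofList l) (1 : K)))
      = MonoidAlgebra.single (FreeMonoid.ofList l) (1 : K) := rfl
  rw [this, MonoidAlgebra.lift_single, FreeMonoid.lift_apply]
  simp [wrd]

def sig : FreeAlgebra K Psi →ₗ[K] FreeAlgebra K Psi :=
  (FreeAlgebra.basisFreeMonoid K Psi).constr K (fun w => sig0 K (FreeMonoid.toList w))

theorem sig_wrd (l : List Psi) : sig K (wrd K l) = sig0 K l := by
  rw [← basis_eq, sig, Module.Basis.constr_basis]
  simp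

/-- extensionality on words -/
theorem hext {M : Type*} [AddCommMonoid M] [Module K M]
    (f g : FreeAlgebra K Psi →ₗ[K] M)
    (h : ∀ l : List Psi, f (wrd K l) = g (wrd K l)) : f = g :=
  Module.Basis.ext (FreeAlgebra.basisFreeMonoid K Psi) fun w => by
    have := h (FreeMonoid.toList w)
    rwa [← basis_eq, FreeMonoid.ofList_toList] at this

theorem sig_s (x : FreeAlgebra K Psi) : sig K (FreeAlgebra.ι K Psi.s * x) = x := by
  have := hext K ((sig K).comp (LinearMap.mulLeft K (FreeAlgebra.ι K Psi.s))) LinearMap.id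
    (fun l => by
      simp only [LinearMap.comp_apply, LinearMap.mulLeft_apply, LinearMap.id_apply,
        ← wrd_cons, sig_wrd, sig0])
  exact LinearMap.congr_fun this x

theorem sig_a (k : Fin 4) (x : FreeAlgebra K Psi) :
    sig K (FreeAlgebra.ι K (Psi.a k) * x) = FreeAlgebra.ι K (Psi.a k) * sig K x := by
  have := hext K ((sig K).comp (LinearMap.mulLeft K (FreeAlgebra.ι K (Psi.a k))))
    ((LinearMap.mulLeft K (FreeAlgebra.ι K (Psi.a k))).comp (sig K))
    (fun l => by
      simp only [LinearMap.comp_apply, LinearMap.mulLeft_apply, ← wrd_cons, sig_wrd, sig0])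
  exact LinearMap.congr_fun this x

theorem sig_R (x : FreeAlgebra K Psi) :
    sig K (FreeAlgebra.ι K Psi.R * x) = FreeAlgebra.ι K Psi.R * sig K x := by
  have := hext K ((sig K).comp (LinearMap.mulLeft K (FreeAlgebra.ι K Psi.R)))
    ((LinearMap.mulLeft K (FreeAlgebra.ι K Psi.R)).comp (sig K))
    (fun l => by
      simp only [LinearMap.comp_apply, LinearMap.mulLeft_apply, ← wrd_cons, sig_wrd, sig0])
  exact LinearMap.congr_fun this x

theorem sig_kill (c : Psi) (hc : c = Psi.t ∨ c = Psi.L ∨ (∃ i, c = Psi.Q i) ∨ ∃ j, c = Psi.P j)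
    (x : FreeAlgebra K Psi) : sig K (FreeAlgebra.ι K c * x) = 0 := by
  have := hext K ((sig K).comp (LinearMap.mulLeft K (FreeAlgebra.ι K c))) 0
    (fun l => by
      simp only [LinearMap.comp_apply, LinearMap.mulLeft_apply, ← wrd_cons, sig_wrd,
        LinearMap.zero_apply]
      rcases hc with rfl | rfl | ⟨i, rfl⟩ | ⟨j, rfl⟩ <;> simp [sig0])
  exact LinearMap.congr_fun this x

theorem sig_t (x : FreeAlgebra K Psi) : sig K (FreeAlgebra.ι K Psi.t * x) = 0 :=
  sig_kill K _ (Or.inl rfl) x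
theorem sig_L (x : FreeAlgebra K Psi) : sig K (FreeAlgebra.ι K Psi.L * x) = 0 :=
  sig_kill K _ (Or.inr (Or.inl rfl)) x
theorem sig_Q (i : Fin 7) (x : FreeAlgebra K Psi) :
    sig K (FreeAlgebra.ι K (Psi.Q i) * x) = 0 :=
  sig_kill K _ (Or.inr (Or.inr (Or.inl ⟨i, rfl⟩))) x
theorem sig_P (j : Fin 4) (x : FreeAlgebra K Psi) :
    sig K (FreeAlgebra.ι K (Psi.P j) * x) = 0 :=
  sig_kill K _ (Or.inr (Or.inr (Or.inr ⟨j, rfl⟩))) x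

/-- `σ` is invariant on each defining relation, multiplied by anything on the right. -/
theorem sig_rel {x y : FreeAlgebra K Psi} (h : HRel K x y) (v : FreeAlgebra K Psi) :
    sig K (x * v) = sig K (y * v) := by
  cases h <;>
    simp only [wrd, List.map_cons, List.map_nil, List.prod_cons, List.prod_nil, mul_one,
      mul_assoc, zero_mul, map_zero, sig_t, sig_L, sig_Q, sig_P, sig_s, sig_a, sig_R, mul_zero]

abbrev mk' : FreeAlgebra K Psi →ₐ[K] AlgH K := RingQuot.mkAlgHom K (HRel K)

theorem mk_rel {x y : FreeAlgebra K Psi} (h : RingQuot.Rel (HRel K) x y) :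
    mk' K x = mk' K y := by
  induction h with
  | of h => exact RingQuot.mkAlgHom_rel K h
  | add_left _ ih => simp only [map_add, ih]
  | mul_left _ ih => simp only [map_mul, ih]
  | mul_right _ ih => simp only [map_mul, ih]

/-- The main step: left multiplication preserves `σ`-equality modulo the ideal. -/
theorem step {x y : FreeAlgebra K Psi}
    (h1 : mk' K (sig K x) = mk' K (sig K y)) (h2 : mk' K x = mk' K y)
    (aa : FreeAlgebra K Psi) : mk' K (sig K (aa * x)) = mk' K (sig K (aa * y)) := by
  have key : ∀ l : List Psi, mk' K (sig K (wrd K l * x)) = mk' K (sig K (wrd K l * y)) := by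
    intro l
    induction l with
    | nil => simpa [wrd] using h1
    | cons c tl ih =>
      rw [wrd_cons, mul_assoc, mul_assoc]
      cases c with
      | s => rw [sig_s, sig_s]; simp only [map_mul, h2]
      | a k => rw [sig_a, sig_a]; simp only [map_mul, ih]
      | R => rw [sig_R, sig_R]; simp only [map_mul, ih]
      | t => rw [sig_t, sig_t]
      | L => rw [sig_L, sig_L]
      | Q i => rw [sig_Q, sig_Q]
      | P j => rw [sig_P, sig_P]
  have := hext K
    (((mk' K).toLinearMap.comp (sig K)).comp (LinearMap.mulRight K x))
    (((mk' K).toLinearMap.comp (sig K)).comp (LinearMap.mulRight K y))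
    (fun l => key l)
  exact LinearMap.congr_fun this aa

theorem key_rel {x y : FreeAlgebra K Psi} (h : RingQuot.Rel (HRel K) x y) :
    ∀ v, mk' K (sig K (x * v)) = mk' K (sig K (y * v)) := by
  induction h with
  | of h => exact fun v => congrArg (mk' K) (sig_rel K h v)
  | add_left _ ih => intro v; simp only [add_mul, map_add, ih v]
  | mul_left _ ih => intro v; rw [mul_assoc, mul_assoc]; exact ih _
  | @mul_right aa b c h ih =>
      intro v
      rw [mul_assoc, mul_assoc]
      exact step K (ih v) (by rw [map_mul, map_mul, mk_rel K h]) aa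

theorem eqvGen_of_mk_eq {x y : FreeAlgebra K Psi} (h : mk' K x = mk' K y) :
    Relation.EqvGen (RingQuot.Rel (HRel K)) x y := by
  have h' : (⟨Quot.mk _ x⟩ : RingQuot (HRel K)) = ⟨Quot.mk _ y⟩ := by
    simpa [mk', RingQuot.mkAlgHom_def, RingQuot.mkRingHom_def] using h
  have h'' : Quot.mk (RingQuot.Rel (HRel K)) x = Quot.mk (RingQuot.Rel (HRel K)) y :=
    congrArg RingQuot.toQuot h'
  exact Quot.eqvGen_exact h''

theorem sig_eqvGen {x y : FreeAlgebra K Psi}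
    (h : Relation.EqvGen (RingQuot.Rel (HRel K)) x y) :
    mk' K (sig K x) = mk' K (sig K y) := by
  induction h with
  | rel a b hab => simpa using key_rel K hab 1
  | refl => rfl
  | symm _ _ _ ih => exact ih.symm
  | trans _ _ _ _ _ ih1 ih2 => exact ih1.trans ih2

theorem sig_mk_eq {x y : FreeAlgebra K Psi} (h : mk' K x = mk' K y) :
    mk' K (sig K x) = mk' K (sig K y) :=
  sig_eqvGen K (eqvGen_of_mk_eq K h)

end SInj


/-- Left multiplication by `s` is injective on images of words in the
algebra `H`: if the images of `s·Y` and `s·Z` in `H` are equal then so are the images of `Y`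
and `Z`. -/
theorem s_mul_left_injective (K : Type*) [Field K] (Y Z : List Psi)
    (h : mkw K (Psi.s :: Y) = mkw K (Psi.s :: Z)) : mkw K Y = mkw K Z := by
  have := SInj.sig_mk_eq K (x := wrd K (Psi.s :: Y)) (y := wrd K (Psi.s :: Z)) h
  rwa [SInj.sig_wrd, SInj.sig_wrd, SInj.sig0, SInj.sig0] at this
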